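/- Let C = {C_1,…,C_k} be a clustering of a finite set X ⊆ ℝ^m with centers μ_j and radii r(C_j), and let ρ ∈ (1/2, 1]. Suppose for every j ∈ [k] there is a representative z_j ∈ C_j with d(z_j, μ_j) < (2ρ−1)·r(C_j). Then for the truthful ρ global distance-weak oracle Q and every x ∈ X: Q(z_j, x) = 1 if and only if x ∈ C_j; hence there is exactly one index j with Q(z_j, x) = 1, and the weak pairwise cluster-assignment query using the representatives z_1,…,z_k returns the correct cluster index for every point. -/
import Mathlib


open Finset
open scoped Classical

/-- The center (mean) of a finite cluster of points in Euclidean space. -/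
noncomputable def ctr {m : ℕ} (C : Finset (EuclideanSpace ℝ (Fin m))) : EuclideanSpace ℝ (Fin m) :=
  (C.card : ℝ)⁻¹ • ∑ x ∈ C, x

/-- The radius of a cluster: the maximal distance of a member to the center. -/
noncomputable def rad {m : ℕ} (C : Finset (EuclideanSpace ℝ (Fin m))) : ℝ :=
  sSup ((fun x => dist x (ctr C)) '' (C : Set (EuclideanSpace ℝ (Fin m))))

/-- Confusion predicate for the (ν, ρ) local distance-weak oracle. -/
def LocalConfused {m k : ℕ} (Cl : Fin k → Finset (EuclideanSpace ℝ (Fin m))) (ν ρ : ℝ)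
    (x y : EuclideanSpace ℝ (Fin m)) : Prop :=
  (∃ i j, i ≠ j ∧ x ∈ Cl i ∧ y ∈ Cl j ∧
    dist x y < (ν - 1) * min (dist x (ctr (Cl i))) (dist y (ctr (Cl j)))) ∨
  (∃ i, x ∈ Cl i ∧ y ∈ Cl i ∧ 2 * ρ * rad (Cl i) < dist x y)

/-- Confusion predicate for the ρ global distance-weak oracle. -/
def GlobalConfused {m k : ℕ} (Cl : Fin k → Finset (EuclideanSpace ℝ (Fin m))) (ρ : ℝ)
    (x y : EuclideanSpace ℝ (Fin m)) : Prop :=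
  (∃ i j, i ≠ j ∧ x ∈ Cl i ∧ y ∈ Cl j ∧
    (ρ * rad (Cl i) < dist x (ctr (Cl i)) ∨ ρ * rad (Cl j) < dist y (ctr (Cl j)))) ∨
  (∃ i, x ∈ Cl i ∧ y ∈ Cl i ∧ 2 * ρ * rad (Cl i) < dist x y)

/-- Two points lie in the same cluster. -/
def SameCluster {m k : ℕ} (Cl : Fin k → Finset (EuclideanSpace ℝ (Fin m)))
    (x y : EuclideanSpace ℝ (Fin m)) : Prop :=
  ∃ i, x ∈ Cl i ∧ y ∈ Cl i

/-- The truthful (ν, ρ) local distance-weak oracle: answers 0 on confused pairs,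
1 on same-cluster non-confused pairs, and -1 on different-cluster non-confused pairs. -/
noncomputable def localQ {m k : ℕ} (Cl : Fin k → Finset (EuclideanSpace ℝ (Fin m))) (ν ρ : ℝ)
    (x y : EuclideanSpace ℝ (Fin m)) : ℤ :=
  if LocalConfused Cl ν ρ x y then 0 else if SameCluster Cl x y then 1 else -1

/-- The truthful ρ global distance-weak oracle. -/
noncomputable def globalQ {m k : ℕ} (Cl : Fin k → Finset (EuclideanSpace ℝ (Fin m))) (ρ : ℝ)
    (x y : EuclideanSpace ℝ (Fin m)) : ℤ :=
  if GlobalConfused Cl ρ x y then 0 else if SameCluster Cl x y then 1 else -1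

lemma dist_le_rad' {m : ℕ} {C : Finset (EuclideanSpace ℝ (Fin m))}
    {x : EuclideanSpace ℝ (Fin m)} (hx : x ∈ C) : dist x (ctr C) ≤ rad C :=
  le_csSup (Set.Finite.bddAbove (C.finite_toSet.image _)) ⟨x, hx, rfl⟩

/-- For ρ ∈ (1/2, 1], if every cluster C_j has a representative z_j with
d(z_j, μ_j) < (2ρ−1)·r(C_j), then for the truthful ρ global distance-weak oracle and
every x ∈ X: Q(z_j, x) = 1 ↔ x ∈ C_j, and exactly one index j has Q(z_j, x) = 1. -/
theorem stmt12 {m k : ℕ} (X : Finset (EuclideanSpace ℝ (Fin m)))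
    (Cl : Fin k → Finset (EuclideanSpace ℝ (Fin m)))
    (hsub : ∀ i, Cl i ⊆ X) (hne : ∀ i, (Cl i).Nonempty)
    (hpart : ∀ x ∈ X, ∃! i, x ∈ Cl i)
    (ρ : ℝ) (hρ0 : 1 / 2 < ρ) (hρ1 : ρ ≤ 1)
    (z : Fin k → EuclideanSpace ℝ (Fin m))
    (hz : ∀ j, z j ∈ Cl j)
    (hzgood : ∀ j, dist (z j) (ctr (Cl j)) < (2 * ρ - 1) * rad (Cl j)) :
    ∀ x ∈ X,
      (∀ j, globalQ Cl ρ (z j) x = 1 ↔ x ∈ Cl j) ∧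
      (∃! j, globalQ Cl ρ (z j) x = 1) := by
  intro x hx
  obtain ⟨i, hxi, hiu⟩ := hpart x hx
  have key : ∀ j, globalQ Cl ρ (z j) x = 1 ↔ x ∈ Cl j := by
    intro j
    have hzju : ∀ l, z j ∈ Cl l → l = j := fun l hl =>
      ((hpart (z j) (hsub j (hz j))).unique hl (hz j))
    constructor
    · intro hQ
      by_contra hxj
      by_cases h1 : GlobalConfused Cl ρ (z j) x
      · simp [globalQ, h1] at hQ
      · by_cases h2 : SameCluster Cl (z j) x
        · obtain ⟨l, hzl, hxl⟩ := h2
          exact hxj ((hzju l hzl) ▸ hxl)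
        · simp [globalQ, h1, h2] at hQ
    · intro hxj
      have hnc : ¬ GlobalConfused Cl ρ (z j) x := by
        rintro (⟨a, b, hab, hza, hxb, _⟩ | ⟨l, hzl, hxl, hd⟩)
        · exact hab (by rw [hzju a hza, hiu b hxb, hiu j hxj])
        · rw [hzju l hzl] at hd hxl
          have h1 : dist (z j) x ≤ dist (z j) (ctr (Cl j)) + dist x (ctr (Cl j)) :=
            dist_triangle_right _ _ _
          have h2 := hzgood j
          have h3 := dist_le_rad' hxl
          nlinarith
      have hsc : SameCluster Cl (z j) x := ⟨j, hz j, hxj⟩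
      simp [globalQ, hnc, hsc]
  exact ⟨key, i, (key i).2 hxi, fun j hj => hiu j ((key j).1 hj)⟩
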